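/- Shuffle vanishing for cell functions: let A and B be nonempty finite lists of pairwise distinct complex numbers (all entries of A distinct from all entries of B). For a list W = (w_1, ..., w_m) with distinct entries, define f(W) = ∏_{i=2}^{m} 1/(w_i - w_{i-1}). Then the sum of f(W) over all shuffles W of A and B equals 0. -/

import Mathlib

/-- The list of all shuffles of two lists: interleavings preserving the relative order
of the entries of each list. -/
def shuffles {α : Type*} : List α → List α → List (List α)
  | [], B => [B]
  | a :: A, [] => [a :: A]
  | a :: A, b :: B =>
      ((shuffles A (b :: B)).map (a :: ·)) ++ ((shuffles (a :: A) B).map (b :: ·))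

/-- The cell function of a list `W = (w₁, …, w_m)`: `∏_{i=2}^m 1/(w_i - w_{i-1})`. -/
noncomputable def cellFun (W : List ℂ) : ℂ :=
  ((W.zip W.tail).map (fun p => (p.2 - p.1)⁻¹)).prod

open Filter Topology

lemma cellFun_singleton (x : ℂ) : cellFun [x] = 1 := by simp [cellFun]

lemma cellFun_cons_cons (x w : ℂ) (t : List ℂ) :
    cellFun (x :: w :: t) = (w - x)⁻¹ * cellFun (w :: t) := by
  simp [cellFun]

/-- The partial-fraction shuffle identity with a marked base point `x`. -/
theorem cellFun_key : ∀ (A B : List ℂ) (x : ℂ), (x :: (A ++ B)).Nodup →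
    ((shuffles A B).map (fun W => cellFun (x :: W))).sum =
      cellFun (x :: A) * cellFun (x :: B)
  | [], B, x, h => by simp [shuffles, cellFun_singleton]
  | a :: A, [], x, h => by simp [shuffles, cellFun_singleton]
  | a :: A, b :: B, x, h => by
    have hax : a ≠ x := by simp at h; tauto
    have hbx : b ≠ x := by simp at h; tauto
    have h1 : (a :: (A ++ (b :: B))).Nodup := by
      have := h.tail; rwa [List.cons_append] at this
    have hab : a ≠ b := by
      have := (List.nodup_cons.mp h1).1; simp at this; tauto
    have h2 : (b :: ((a :: A) ++ B)).Nodup := by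
      have hp : ((a :: A) ++ (b :: B)).Perm (b :: ((a :: A) ++ B)) := List.perm_middle
      exact hp.nodup h.tail
    have ih1 := cellFun_key A (b :: B) a h1
    have ih2 := cellFun_key (a :: A) B b h2
    rw [shuffles, List.map_append, List.sum_append, List.map_map, List.map_map]
    simp only [Function.comp_def, cellFun_cons_cons]
    rw [List.sum_map_mul_left, List.sum_map_mul_left, ih1, ih2,
      cellFun_cons_cons a b B, cellFun_cons_cons b a A]
    have hax' : a - x ≠ 0 := sub_ne_zero.mpr hax
    have hbx' : b - x ≠ 0 := sub_ne_zero.mpr hbx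
    have hab' : a - b ≠ 0 := sub_ne_zero.mpr hab
    have hba' : b - a ≠ 0 := sub_ne_zero.mpr hab.symm
    field_simp
    ring
termination_by A B => A.length + B.length

lemma tendsto_sub_inv_zero (c : ℂ) :
    Tendsto (fun t : ℝ => ((c : ℂ) - t)⁻¹) atTop (nhds 0) := by
  rw [tendsto_zero_iff_norm_tendsto_zero]
  have hn : Tendsto (fun t : ℝ => ‖(c : ℂ) - t‖) atTop atTop := by
    apply tendsto_atTop_mono' _ (_ : ∀ᶠ t : ℝ in atTop, t - ‖c‖ ≤ ‖(c:ℂ) - t‖)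
    · exact tendsto_atTop_add_const_right _ _ tendsto_id
    · filter_upwards with t
      calc t - ‖c‖ ≤ ‖(t:ℂ)‖ - ‖c‖ := by
            simp only [Complex.norm_real, Real.norm_eq_abs]
            have := le_abs_self t
            linarith
        _ ≤ ‖(c:ℂ) - t‖ := by
            have := norm_sub_norm_le ((t:ℂ)) c
            rw [norm_sub_rev] at this
            linarith
  simpa [Function.comp_def] using tendsto_inv_atTop_zero.comp hn

lemma tendsto_mul_sub_inv (c : ℂ) :
    Tendsto (fun t : ℝ => (t : ℂ) * (c - t)⁻¹) atTop (nhds (-1)) := by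
  have h0 := tendsto_sub_inv_zero c
  have heq : (fun t : ℝ => (t : ℂ) * ((c:ℂ) - t)⁻¹)
      =ᶠ[atTop] (fun t : ℝ => -1 + c * ((c:ℂ) - t)⁻¹) := by
    filter_upwards [eventually_gt_atTop ‖c‖] with t ht
    have hne : (c : ℂ) - t ≠ 0 := by
      intro h
      have hc : c = (t : ℂ) := by linear_combination h
      rw [hc] at ht
      simp only [Complex.norm_real, Real.norm_eq_abs] at ht
      have := le_abs_self t
      linarith
    field_simp
    ring
  have hlim : Tendsto (fun t : ℝ => -1 + c * ((c:ℂ) - t)⁻¹) atTop (nhds (-1 + c * 0)) :=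
    tendsto_const_nhds.add (tendsto_const_nhds.mul h0)
  simpa using hlim.congr' heq.symm

/-- A shuffle of a nonempty list with anything is nonempty. -/
lemma mem_shuffles_ne_nil {α : Type*} {A B W : List α} (hA : A ≠ [])
    (hW : W ∈ shuffles A B) : W ≠ [] := by
  match A, B with
  | [], B => exact absurd rfl hA
  | a :: A, [] =>
    simp only [shuffles, List.mem_singleton] at hW
    subst hW; simp
  | a :: A, b :: B =>
    simp only [shuffles, List.mem_append, List.mem_map] at hW
    rcases hW with ⟨W', _, rfl⟩ | ⟨W', _, rfl⟩ <;> simp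

/-- Eventually `(t : ℂ)` avoids every entry of a finite list. -/
lemma eventually_not_mem (L : List ℂ) :
    ∀ᶠ t : ℝ in atTop, (t : ℂ) ∉ L := by
  induction L with
  | nil => simp
  | cons c L ih =>
    filter_upwards [ih, eventually_gt_atTop ‖c‖] with t ht hc
    simp only [List.mem_cons, not_or]
    refine ⟨fun h => ?_, ht⟩
    rw [← h] at hc
    simp only [Complex.norm_real, Real.norm_eq_abs] at hc
    have := le_abs_self t
    linarith

lemma tendsto_list_sum' {α : Type*} (L : List α) (f : ℝ → α → ℂ) (g : α → ℂ)
    (h : ∀ a ∈ L, Tendsto (fun t => f t a) atTop (nhds (g a))) :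
    Tendsto (fun t => (L.map (f t)).sum) atTop (nhds ((L.map g).sum)) := by
  induction L with
  | nil => simp only [List.map_nil, List.sum_nil]; exact tendsto_const_nhds
  | cons a L ih =>
    simp only [List.map_cons, List.sum_cons]
    exact (h a (by simp)).add (ih (fun a ha => h a (by simp [ha])))

/-- Shuffle vanishing for cell functions: for nonempty lists `A`, `B` of pairwise
distinct complex numbers, the sum of the cell function over all shuffles of `A` and `B`
vanishes. -/
theorem shuffle_sum_cellFun_eq_zero (A B : List ℂ) (hA : A ≠ []) (hB : B ≠ [])
    (hnd : (A ++ B).Nodup) :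
    ((shuffles A B).map cellFun).sum = 0 := by
  set S := shuffles A B with hS
  -- the function F t = t * ∑_W cellFun (t :: W)
  -- limit of F is -(∑ cellFun W)
  have hlim1 : Tendsto (fun t : ℝ => (S.map (fun W => (t : ℂ) * cellFun ((t:ℂ) :: W))).sum)
      atTop (nhds ((S.map (fun W => -cellFun W)).sum)) := by
    apply tendsto_list_sum'
    intro W hW
    obtain ⟨w, T, rfl⟩ := List.exists_cons_of_ne_nil (mem_shuffles_ne_nil hA hW)
    have : (fun t : ℝ => (t : ℂ) * cellFun ((t:ℂ) :: w :: T))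
        = fun t : ℝ => ((t : ℂ) * (w - t)⁻¹) * cellFun (w :: T) := by
      funext t; rw [cellFun_cons_cons]; ring
    rw [this]
    have := (tendsto_mul_sub_inv w).mul_const (cellFun (w :: T))
    simpa using this
  -- F is eventually equal to t * cellFun(t::A) * cellFun(t::B), which tends to 0
  obtain ⟨a, A', rfl⟩ := List.exists_cons_of_ne_nil hA
  obtain ⟨b, B', rfl⟩ := List.exists_cons_of_ne_nil hB
  have heq : (fun t : ℝ => (S.map (fun W => (t : ℂ) * cellFun ((t:ℂ) :: W))).sum)
      =ᶠ[atTop] (fun t : ℝ =>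
        ((t : ℂ) * (a - t)⁻¹) * ((b - t)⁻¹ * (cellFun (a :: A') * cellFun (b :: B')))) := by
    filter_upwards [eventually_not_mem ((a :: A') ++ (b :: B'))] with t ht
    have hnd' : ((t : ℂ) :: ((a :: A') ++ (b :: B'))).Nodup := List.nodup_cons.mpr ⟨ht, hnd⟩
    have hk := cellFun_key (a :: A') (b :: B') (t : ℂ) hnd'
    calc (S.map (fun W => (t : ℂ) * cellFun ((t:ℂ) :: W))).sum
        = (t : ℂ) * (S.map (fun W => cellFun ((t:ℂ) :: W))).sum := by
          rw [List.sum_map_mul_left]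
      _ = (t : ℂ) * (cellFun ((t:ℂ) :: a :: A') * cellFun ((t:ℂ) :: b :: B')) := by
          rw [hS, hk]
      _ = ((t : ℂ) * (a - t)⁻¹) * ((b - t)⁻¹ * (cellFun (a :: A') * cellFun (b :: B'))) := by
          rw [cellFun_cons_cons, cellFun_cons_cons]; ring
  have hlim2 : Tendsto (fun t : ℝ =>
      ((t : ℂ) * (a - t)⁻¹) * ((b - t)⁻¹ * (cellFun (a :: A') * cellFun (b :: B'))))
      atTop (nhds ((-1) * (0 * (cellFun (a :: A') * cellFun (b :: B'))))) :=
    (tendsto_mul_sub_inv a).mul ((tendsto_sub_inv_zero b).mul tendsto_const_nhds)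
  have hzero : Tendsto (fun t : ℝ => (S.map (fun W => (t : ℂ) * cellFun ((t:ℂ) :: W))).sum)
      atTop (nhds 0) := by
    simpa using hlim2.congr' heq.symm
  have huniq := tendsto_nhds_unique hlim1 hzero
  have hneg : (S.map fun W => -cellFun W).sum = -((S.map cellFun).sum) := by
    induction S with
    | nil => simp
    | cons W S ih => simp [ih]; ring
  rw [hneg] at huniq
  simpa using huniq
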